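/- Let Λ be a lattice with ℤⁿ ⊆ Λ ⊆ ℚⁿ and standard basis frame ℰ = {e₁,…,eₙ}. Then there exists a lattice Λ' with ℤⁿ ⊆ Λ' ⊆ Λ such that every vector of Λ' has coordinates whose denominators are square-free, and d(ℰ, Λ') = d(ℰ, Λ). -/

import Mathlib

/-- The integer lattice ℤⁿ viewed as a ℤ-submodule of ℚⁿ. -/
def intLattice (n : ℕ) : Submodule ℤ (Fin n → ℚ) :=
  Submodule.span ℤ (Set.range fun i => (Pi.single i 1 : Fin n → ℚ))

/-- The defect d(ℰ, Λ): the smallest d such that some n − d standard basis vectors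
together with d lattice vectors form a ℤ-basis of Λ. -/
noncomputable def defect (n : ℕ) (Λ : Submodule ℤ (Fin n → ℚ)) : ℕ :=
  sInf {d | ∃ (S : Finset (Fin n)) (b : Module.Basis (Fin n) ℤ Λ),
    S.card = n - d ∧ ∀ i ∈ S, ∃ j, (b j : Fin n → ℚ) = Pi.single i 1}

section helper


lemma den_dvd_iff (q : ℚ) {m : ℕ} : ((m : ℚ) * q).den = 1 ↔ q.den ∣ m := by
  have h1 : (m:ℚ) * q = ((m * q.num : ℤ) : ℚ) / ((q.den : ℤ) : ℚ) := by
    push_cast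
    rw [mul_div_assoc, Rat.num_div_den]
  rw [h1, Rat.den_div_intCast_eq_one_iff _ _ (by exact_mod_cast q.den_ne_zero)]
  constructor
  · intro h
    have h2 : q.den ∣ m * q.num.natAbs := by
      have := Int.natAbs_dvd_natAbs.mpr h
      simpa [Int.natAbs_mul] using this
    exact (Nat.Coprime.dvd_of_dvd_mul_right (Nat.Coprime.symm q.reduced) h2)
  · intro h
    exact Dvd.dvd.mul_right (by exact_mod_cast h) _

lemma den_one_add {q r : ℚ} (hq : q.den = 1) (hr : r.den = 1) : (q + r).den = 1 := by
  have := Rat.add_den_dvd q r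
  rw [hq, hr] at this
  simpa using this

lemma den_one_intMul (c : ℤ) {q : ℚ} (hq : q.den = 1) : ((c:ℚ) * q).den = 1 := by
  have := Rat.mul_den_dvd (c:ℚ) q
  rw [Rat.den_intCast, hq] at this
  simpa using this

lemma squarefree_lcm {a b : ℕ} (ha : Squarefree a) (hb : Squarefree b) :
    Squarefree (Nat.lcm a b) := by
  have ha0 : a ≠ 0 := ha.ne_zero
  have hb0 : b ≠ 0 := hb.ne_zero
  rw [Nat.squarefree_iff_factorization_le_one (Nat.lcm_ne_zero ha0 hb0),
    Nat.factorization_lcm ha0 hb0]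
  intro p
  simp only [Finsupp.sup_apply]
  exact sup_le ((Nat.squarefree_iff_factorization_le_one ha0).1 ha p)
    ((Nat.squarefree_iff_factorization_le_one hb0).1 hb p)

lemma den_add_dvd_lcm (q r : ℚ) : (q + r).den ∣ Nat.lcm q.den r.den := by
  rw [← den_dvd_iff, mul_add]
  exact den_one_add ((den_dvd_iff q).2 (Nat.dvd_lcm_left _ _))
    ((den_dvd_iff r).2 (Nat.dvd_lcm_right _ _))

/-- The submodule of vectors all of whose coordinate denominators are squarefree. -/
def sqfSub (n : ℕ) : Submodule ℤ (Fin n → ℚ) where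
  carrier := {x | ∀ i, Squarefree (x i).den}
  add_mem' := by
    intro a b ha hb i
    exact Squarefree.squarefree_of_dvd (by simpa using den_add_dvd_lcm (a i) (b i))
      (squarefree_lcm (ha i) (hb i))
  zero_mem' := by
    intro i
    simp [Rat.den_ofNat]
  smul_mem' := by
    intro c x hx i
    have : ((c • x) i) = (c : ℚ) * x i := by simp [Pi.smul_apply, zsmul_eq_mul]
    rw [this]
    have hd := Rat.mul_den_dvd (c:ℚ) (x i)
    rw [Rat.den_intCast, one_mul] at hd
    exact Squarefree.squarefree_of_dvd hd (hx i)

/-- The submodule of vectors all of whose coordinates are integers (denominator 1). -/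
def denOneSub (n : ℕ) : Submodule ℤ (Fin n → ℚ) where
  carrier := {x | ∀ i, (x i).den = 1}
  add_mem' := fun ha hb i => den_one_add (ha i) (hb i)
  zero_mem' := by intro i; simp [Rat.den_ofNat]
  smul_mem' := by
    intro c x hx i
    have : ((c • x) i) = (c : ℚ) * x i := by simp [Pi.smul_apply, zsmul_eq_mul]
    rw [this]
    exact den_one_intMul c (hx i)


lemma mem_sqfSub {n : ℕ} {x : Fin n → ℚ} : x ∈ sqfSub n ↔ ∀ i, Squarefree (x i).den :=
  Iff.rfl

lemma mem_denOneSub {n : ℕ} {x : Fin n → ℚ} : x ∈ denOneSub n ↔ ∀ i, (x i).den = 1 :=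
  Iff.rfl

section eps
variable {n : ℕ}

lemma den_single (i l : Fin n) : ((Pi.single i 1 : Fin n → ℚ) l).den = 1 := by
  rcases eq_or_ne i l with rfl | h
  · simp
  · simp [Pi.single_apply, Ne.symm h]

lemma eps_mem_intLattice (i : Fin n) : (Pi.single i 1 : Fin n → ℚ) ∈ intLattice n :=
  Submodule.subset_span ⟨i, rfl⟩

lemma intLattice_le_denOneSub : intLattice n ≤ denOneSub n := by
  rw [intLattice, Submodule.span_le]
  rintro _ ⟨i, rfl⟩
  exact mem_denOneSub.2 (den_single i)

lemma intLattice_le_sqfSub : intLattice n ≤ sqfSub n := by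
  intro x hx
  exact mem_sqfSub.2 fun i => by
    rw [mem_denOneSub.1 (intLattice_le_denOneSub hx) i]; exact squarefree_one

lemma epsLI : LinearIndependent ℤ (fun i => (Pi.single i 1 : Fin n → ℚ)) := by
  have hq : LinearIndependent ℚ (fun i => (Pi.single i 1 : Fin n → ℚ)) := by
    have := (Pi.basisFun ℚ (Fin n)).linearIndependent
    simpa [funext (Pi.basisFun_apply ℚ (Fin n))] using this
  exact hq.restrict_scalars (smul_left_injective ℤ one_ne_zero)

/-- A vector supported on `S` with integer coordinates lies in the span of `{eᵢ : i ∈ S}`. -/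
lemma mem_span_eps {S : Finset (Fin n)} {x : Fin n → ℚ} (h0 : ∀ i ∉ S, x i = 0)
    (hden : ∀ i, (x i).den = 1) :
    x ∈ Submodule.span ℤ (Set.range fun i : S => (Pi.single i.1 1 : Fin n → ℚ)) := by
  have hx : x = ∑ i ∈ S, (x i).num • (Pi.single i 1 : Fin n → ℚ) := by
    funext l
    rw [Finset.sum_apply]
    by_cases hl : l ∈ S
    · rw [Finset.sum_eq_single l (fun b _ hb => by simp [Pi.single_apply, hb]) (fun h => absurd hl h)]
      simp only [Pi.smul_apply, Pi.single_eq_same, zsmul_eq_mul, mul_one]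
      exact ((Rat.den_eq_one_iff _).1 (hden l)).symm
    · rw [h0 l hl, Finset.sum_eq_zero]
      intro b hb
      have : b ≠ l := fun h => hl (h ▸ hb)
      simp [Pi.single_apply, this]
  rw [hx]
  exact Submodule.sum_mem _ fun i hi =>
    Submodule.smul_mem _ _ (Submodule.subset_span ⟨⟨i, hi⟩, rfl⟩)

/-- Saturation of `span{eᵢ : i ∈ S}` in Λ. -/
def Sat (n : ℕ) (Λ : Submodule ℤ (Fin n → ℚ)) (S : Finset (Fin n)) : Prop :=
  ∀ x ∈ Λ, (∀ i ∉ S, x i = 0) → ∀ i, (x i).den = 1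

lemma sat_of_le {Λ Λ' : Submodule ℤ (Fin n → ℚ)} {S : Finset (Fin n)} (h : Λ' ≤ Λ)
    (hs : Sat n Λ S) : Sat n Λ' S := fun x hx => hs x (h hx)

/-- The key arithmetic step: saturation transfers from the squarefree sublattice to Λ. -/
lemma sat_of_sat_inf {Λ : Submodule ℤ (Fin n → ℚ)} {S : Finset (Fin n)}
    (hs : Sat n (Λ ⊓ sqfSub n) S) : Sat n Λ S := by
  have key : ∀ m : ℕ, m ≠ 0 → ∀ x ∈ Λ, (∀ i ∉ S, x i = 0) → (∀ i, (x i).den ∣ m) →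
      ∀ i, (x i).den = 1 := by
    intro m
    induction m using Nat.strong_induction_on with
    | _ m ih =>
      intro hm0 x hx h0 hdvd i
      rcases eq_or_ne m 1 with rfl | hm1
      · exact Nat.eq_one_of_dvd_one (hdvd i)
      · obtain ⟨p, hp, hpm⟩ := Nat.exists_prime_and_dvd hm1
        set z : Fin n → ℚ := ((m / p : ℕ) : ℤ) • x with hz
        have hzΛ : z ∈ Λ := Submodule.smul_mem _ _ hx
        have hzval : ∀ l, z l = ((m / p : ℕ) : ℚ) * x l := by
          intro l
          rw [hz, Pi.smul_apply, zsmul_eq_mul, Int.cast_natCast]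
        have hzden : ∀ l, (z l).den ∣ p := by
          intro l
          rw [← den_dvd_iff]
          rw [hzval l, ← mul_assoc]
          have : ((p : ℚ) * ((m / p : ℕ) : ℚ)) = ((m : ℕ) : ℚ) := by
            rw [← Nat.cast_mul, Nat.mul_div_cancel' hpm]
          rw [this]
          exact (den_dvd_iff _).2 (hdvd l)
        have hzsqf : z ∈ sqfSub n := mem_sqfSub.2 fun l =>
          Squarefree.squarefree_of_dvd (hzden l) hp.squarefree
        have hz0 : ∀ l ∉ S, z l = 0 := fun l hl => by rw [hzval l, h0 l hl, mul_zero]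
        have hzden1 : ∀ l, (z l).den = 1 := hs z ⟨hzΛ, hzsqf⟩ hz0
        have hxdvd : ∀ l, (x l).den ∣ m / p := by
          intro l
          rw [← den_dvd_iff, ← hzval l]
          exact hzden1 l
        have hmp0 : m / p ≠ 0 :=
          (Nat.div_pos (Nat.le_of_dvd (Nat.pos_of_ne_zero hm0) hpm) hp.pos).ne'
        have hlt : m / p < m := Nat.div_lt_self (Nat.pos_of_ne_zero hm0) hp.one_lt
        exact ih (m / p) hlt hmp0 x hx h0 hxdvd i
  intro x hx h0
  exact key (∏ l, (x l).den) (Finset.prod_ne_zero_iff.2 fun l _ => (x l).den_ne_zero) x hx h0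
    (fun l => Finset.dvd_prod_of_mem _ (Finset.mem_univ l))

lemma single_injective {i i' : Fin n} (h : (Pi.single i 1 : Fin n → ℚ) = Pi.single i' 1) :
    i = i' := by
  by_contra hne
  have h1 := congrFun h i
  rw [Pi.single_eq_same, Pi.single_apply, if_neg hne] at h1
  exact one_ne_zero h1

lemma sat_of_basis {Λ : Submodule ℤ (Fin n → ℚ)} (b : Module.Basis (Fin n) ℤ Λ) (S : Finset (Fin n))
    (hb : ∀ i ∈ S, ∃ j, (b j : Fin n → ℚ) = Pi.single i 1) : Sat n Λ S := by
  intro x hx h0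
  have hchoice : ∀ i : {i // i ∈ S}, ∃ j, (b j : Fin n → ℚ) = Pi.single i.1 1 :=
    fun i => hb i.1 i.2
  choose j hj using hchoice
  have hjinj : Function.Injective j := by
    intro a a' h
    have : (Pi.single a.1 1 : Fin n → ℚ) = Pi.single a'.1 1 := by rw [← hj a, ← hj a', h]
    exact Subtype.ext (single_injective this)
  set k : ℕ := ∏ l, (x l).den with hk
  have hk0 : k ≠ 0 := Finset.prod_ne_zero_iff.2 fun l _ => (x l).den_ne_zero
  have hkden : ∀ l, ((k : ℚ) * x l).den = 1 :=
    fun l => (den_dvd_iff _).2 (Finset.dvd_prod_of_mem _ (Finset.mem_univ l))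
  have hsum : (k : ℤ) • (⟨x, hx⟩ : Λ) = ∑ i ∈ S.attach, (((k : ℚ) * x i.1).num) • b (j i) := by
    apply Subtype.ext
    have hcoe : ((∑ i ∈ S.attach, (((k : ℚ) * x i.1).num) • b (j i) : Λ) : Fin n → ℚ)
        = ∑ i ∈ S.attach, (((k : ℚ) * x i.1).num) • (b (j i) : Fin n → ℚ) := by
      push_cast
      rfl
    rw [Submodule.coe_smul, hcoe]
    funext l
    rw [Finset.sum_apply, Pi.smul_apply, zsmul_eq_mul, Int.cast_natCast]
    have hterm : ∀ i ∈ S.attach, ((((k : ℚ) * x i.1).num) • (b (j i) : Fin n → ℚ)) l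
        = (if i.1 = l then ((((k : ℚ) * x i.1).num : ℤ) : ℚ) else 0) := by
      intro i _
      rw [hj i, Pi.smul_apply, Pi.single_apply, zsmul_eq_mul]
      rcases eq_or_ne i.1 l with h | h
      · simp [h]
      · simp [h, Ne.symm h]
    rw [Finset.sum_congr rfl hterm]
    by_cases hl : l ∈ S
    · rw [Finset.sum_eq_single (⟨l, hl⟩ : {i // i ∈ S})]
      · rw [if_pos rfl]
        exact ((Rat.den_eq_one_iff _).1 (hkden l)).symm
      · intro c _ hc
        exact if_neg (fun h => hc (Subtype.ext h))
      · intro h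
        exact absurd (Finset.mem_attach _ _) h
    · rw [Finset.sum_eq_zero (fun c _ => if_neg (fun h : c.1 = l => hl (by rw [← h]; exact c.2)))]
      exact (by rw [h0 l hl, mul_zero] : (k:ℚ) * x l = 0)
  have hrepr := congrArg (b.repr) hsum
  rw [map_smul, map_sum] at hrepr
  simp only [map_smul, Module.Basis.repr_self] at hrepr
  intro i
  by_cases hi : i ∈ S
  · have hev := congrArg (fun f : Fin n →₀ ℤ => f (j ⟨i, hi⟩)) hrepr
    simp only [Finsupp.smul_apply, Finsupp.finset_sum_apply, Finsupp.single_apply,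
      smul_eq_mul] at hev
    rw [Finset.sum_eq_single (⟨i, hi⟩ : {a // a ∈ S})] at hev
    · rw [if_pos rfl, mul_one] at hev
      set c : ℤ := (b.repr ⟨x, hx⟩) (j ⟨i, hi⟩) with hc
      have hxi : (k : ℚ) * x i = (k : ℚ) * (c : ℚ) := by
        rw [← ((Rat.den_eq_one_iff _).1 (hkden i))]
        rw [← hev]
        push_cast
        ring
      have hxc : x i = (c : ℚ) :=
        mul_left_cancel₀ (Nat.cast_ne_zero.2 hk0 : (k:ℚ) ≠ 0) hxi
      rw [hxc, Rat.den_intCast]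
    · intro c _ hc
      rw [if_neg (fun h => hc (hjinj h)), mul_zero]
    · intro h
      exact absurd (Finset.mem_attach _ _) h
  · rw [h0 i hi]
    rfl

lemma basis_of_sat {Λ : Submodule ℤ (Fin n → ℚ)} (hΛ : intLattice n ≤ Λ) (hfg : Λ.FG)
    {S : Finset (Fin n)} (hsat : Sat n Λ S) :
    ∃ b : Module.Basis (Fin n) ℤ Λ, ∀ i ∈ S, ∃ j, (b j : Fin n → ℚ) = Pi.single i 1 := by
  classical
  haveI : Module.Finite ℤ Λ := Module.Finite.iff_fg.2 hfg
  -- the span of the standard vectors indexed by S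
  set v : S → (Fin n → ℚ) := fun i => Pi.single i.1 1 with hv
  have hli : LinearIndependent ℤ v := epsLI.comp _ Subtype.val_injective
  set N : Submodule ℤ (Fin n → ℚ) := Submodule.span ℤ (Set.range v) with hN
  have hNmem : ∀ w ∈ N, (∀ i ∉ S, w i = 0) ∧ (∀ i, (w i).den = 1) := by
    intro w hw
    induction hw using Submodule.span_induction with
    | mem y hy =>
      obtain ⟨i, rfl⟩ := hy
      constructor
      · intro l hl
        exact Pi.single_eq_of_ne (fun h : l = i.1 => hl (by rw [h]; exact i.2)) 1
      · exact den_single i.1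
    | zero => exact ⟨fun _ _ => rfl, fun _ => rfl⟩
    | add y z _ _ hy hz =>
      refine ⟨fun i hi => by rw [Pi.add_apply, hy.1 i hi, hz.1 i hi, add_zero], fun i => ?_⟩
      have := Rat.add_den_dvd (y i) (z i)
      rw [hy.2 i, hz.2 i] at this
      simpa using this
    | smul c y _ hy =>
      refine ⟨fun i hi => by rw [Pi.smul_apply, hy.1 i hi, smul_zero], fun i => ?_⟩
      have h1 : (c • y) i = (c : ℚ) * y i := by rw [Pi.smul_apply, zsmul_eq_mul]
      rw [h1]
      have := Rat.mul_den_dvd (c:ℚ) (y i)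
      rw [Rat.den_intCast, hy.2 i] at this
      simpa using this
  have hNΛ : N ≤ Λ := by
    rw [hN, Submodule.span_le]
    rintro _ ⟨i, rfl⟩
    exact hΛ (eps_mem_intLattice i.1)
  set Nc : Submodule ℤ Λ := N.comap Λ.subtype with hNc
  have hNc_mem : ∀ y : Λ, y ∈ Nc ↔ (y : Fin n → ℚ) ∈ N := fun y => Iff.rfl
  -- the quotient is torsion-free, hence free
  haveI : NoZeroSMulDivisors ℤ (Λ ⧸ Nc) := by
    refine ⟨fun {c} {q} h => ?_⟩
    obtain ⟨y, rfl⟩ := Submodule.Quotient.mk_surjective Nc q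
    rcases eq_or_ne c 0 with rfl | hc
    · exact Or.inl rfl
    · right
      rw [← Submodule.Quotient.mk_smul, Submodule.Quotient.mk_eq_zero] at h
      rw [Submodule.Quotient.mk_eq_zero]
      have hcy : ((c • y : Λ) : Fin n → ℚ) ∈ N := h
      have h0 : ∀ i ∉ S, (y : Fin n → ℚ) i = 0 := by
        intro i hi
        have := (hNmem _ hcy).1 i hi
        rw [Submodule.coe_smul, Pi.smul_apply, zsmul_eq_mul] at this
        rcases mul_eq_zero.1 this with h' | h'
        · exact absurd (by exact_mod_cast h') hc
        · exact h'
      have hden : ∀ i, ((y : Fin n → ℚ) i).den = 1 := hsat y y.2 h0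
      exact mem_span_eps h0 hden
  haveI : Module.Finite ℤ (Λ ⧸ Nc) := Module.Finite.quotient ℤ _
  haveI : Module.Free ℤ (Λ ⧸ Nc) := Module.free_of_finite_type_torsion_free'
  -- split the quotient map
  obtain ⟨s, hs⟩ := Module.projective_lifting_property Nc.mkQ (LinearMap.id)
    (Submodule.Quotient.mk_surjective Nc)
  have hsapp : ∀ q, Nc.mkQ (s q) = q := fun q => congrArg (fun f => f q) (congrArg DFunLike.coe hs)
  have hsinj : Function.Injective s := by
    intro q q' h
    rw [← hsapp q, ← hsapp q', h]
  set C : Submodule ℤ Λ := LinearMap.range s with hC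
  have hcompl : IsCompl Nc C := by
    constructor
    · rw [disjoint_iff_inf_le]
      rintro y ⟨hy1, q, rfl⟩
      have : Nc.mkQ (s q) = 0 := (Submodule.Quotient.mk_eq_zero _).2 hy1
      rw [hsapp] at this
      rw [this]
      simp
    · rw [codisjoint_iff_le_sup]
      intro y _
      have : y - s (Nc.mkQ y) ∈ Nc := by
        rw [← Submodule.Quotient.mk_eq_zero]
        have : Nc.mkQ (y - s (Nc.mkQ y)) = 0 := by
          rw [map_sub, hsapp, sub_self]
        exact this
      have hdecomp : y = (y - s (Nc.mkQ y)) + s (Nc.mkQ y) := (sub_add_cancel _ _).symm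
      rw [hdecomp]
      exact Submodule.add_mem_sup this ⟨Nc.mkQ y, rfl⟩
  -- bases
  set bN : Module.Basis S ℤ N := Module.Basis.span hli with hbN
  set eNc : Nc ≃ₗ[ℤ] N := Submodule.comapSubtypeEquivOfLe hNΛ with heNc
  set bNc : Module.Basis S ℤ Nc := bN.map eNc.symm with hbNc
  set κ := Module.Free.ChooseBasisIndex ℤ (Λ ⧸ Nc) with hκ
  set bQ : Module.Basis κ ℤ (Λ ⧸ Nc) := Module.Free.chooseBasis ℤ (Λ ⧸ Nc) with hbQ
  set eC : (Λ ⧸ Nc) ≃ₗ[ℤ] C := LinearEquiv.ofInjective s hsinj with heC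
  set bC : Module.Basis κ ℤ C := bQ.map eC with hbC
  set B : Module.Basis (S ⊕ κ) ℤ Λ := (bNc.prod bC).map (Submodule.prodEquivOfIsCompl Nc C hcompl)
    with hB
  have hBl : ∀ i : S, (B (Sum.inl i) : Fin n → ℚ) = Pi.single i.1 1 := by
    intro i
    rw [hB, Module.Basis.map_apply, Module.Basis.prod_apply]
    simp only [Sum.elim_inl, Function.comp_apply]
    have h1 : (Submodule.prodEquivOfIsCompl Nc C hcompl) ((LinearMap.inl ℤ Nc C) (bNc i))
        = ((bNc i : Λ) : Λ) := by
      simp [Submodule.coe_prodEquivOfIsCompl]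
    rw [h1]
    have h2 : ((bNc i : Λ) : Fin n → ℚ) = ((bN i : N) : Fin n → ℚ) := by
      rw [hbNc, Module.Basis.map_apply]
      rfl
    rw [h2, hbN, Module.Basis.span_apply]
  -- cardinality
  have hcard : Fintype.card (S ⊕ κ) = n := by
    have h1 : Fintype.card (S ⊕ κ) = Module.finrank ℤ Λ :=
      (Module.finrank_eq_card_basis B).symm
    have h2 : Module.finrank ℤ Λ ≤ n := by
      have hind : LinearIndependent ℤ (fun t : S ⊕ κ => (B t : Fin n → ℚ)) :=
        B.linearIndependent.map' Λ.subtype (Submodule.ker_subtype Λ)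
      have hindQ : LinearIndependent ℚ (fun t : S ⊕ κ => (B t : Fin n → ℚ)) :=
        (LinearIndependent.iff_fractionRing ℤ ℚ).1 hind
      have := hindQ.fintype_card_le_finrank
      rw [Module.finrank_pi ℚ] at this
      simpa [h1.symm, Fintype.card_fin] using this
    have h3 : n ≤ Module.finrank ℤ Λ := by
      set w : Fin n → Λ := fun i => ⟨Pi.single i 1, hΛ (eps_mem_intLattice i)⟩ with hw
      have hweq : (fun i => (Λ.subtype (w i))) = (fun i => (Pi.single i 1 : Fin n → ℚ)) := rfl
      have hwind : LinearIndependent ℤ w := by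
        apply LinearIndependent.of_comp Λ.subtype
        exact epsLI
      have := hwind.fintype_card_le_finrank
      simpa using this
    omega
  set ee : (S ⊕ κ) ≃ Fin n := Fintype.equivFinOfCardEq hcard with hee
  refine ⟨B.reindex ee, fun i hi => ⟨ee (Sum.inl ⟨i, hi⟩), ?_⟩⟩
  rw [Module.Basis.reindex_apply, Equiv.symm_apply_apply]
  exact hBl ⟨i, hi⟩

lemma fg_of_le {n : ℕ} {Λ Λ' : Submodule ℤ (Fin n → ℚ)} (h : Λ' ≤ Λ) (hfg : Λ.FG) : Λ'.FG := by
  haveI : IsNoetherian ℤ Λ := isNoetherian_of_fg_of_noetherian Λ hfg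
  have h1 : (Λ'.comap Λ.subtype).FG := IsNoetherian.noetherian _
  have h2 : Submodule.map Λ.subtype (Λ'.comap Λ.subtype) = Λ' :=
    Submodule.map_comap_eq_self (by rw [Submodule.range_subtype]; exact h)
  rw [← h2]
  exact h1.map _

end eps
end helper

/-- there is a sublattice Λ' with ℤⁿ ⊆ Λ' ⊆ Λ all of whose vectors have
square-free coordinate denominators, and with the same defect as Λ. -/
theorem stmt2 (n : ℕ) (Λ : Submodule ℤ (Fin n → ℚ)) (hΛ : intLattice n ≤ Λ) :
    ∃ Λ' : Submodule ℤ (Fin n → ℚ), intLattice n ≤ Λ' ∧ Λ' ≤ Λ ∧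
      (∀ x ∈ Λ', ∀ i, Squarefree (x i).den) ∧ defect n Λ' = defect n Λ := by
  by_cases hb : Nonempty (Module.Basis (Fin n) ℤ Λ)
  · -- Λ is free of rank n: take Λ' = Λ ⊓ sqfSub n
    obtain ⟨b₀⟩ := hb
    have hfgΛ : Λ.FG := Module.Finite.iff_fg.1 (Module.Finite.of_basis b₀)
    refine ⟨Λ ⊓ sqfSub n, le_inf hΛ intLattice_le_sqfSub, inf_le_left,
      fun x hx i => (mem_sqfSub.1 hx.2) i, ?_⟩
    have hfg' : (Λ ⊓ sqfSub n).FG := fg_of_le inf_le_left hfgΛ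
    have hint' : intLattice n ≤ Λ ⊓ sqfSub n := le_inf hΛ intLattice_le_sqfSub
    unfold defect
    congr 1
    ext d
    constructor
    · rintro ⟨S, b', hcard, hstd⟩
      have hsat' : Sat n (Λ ⊓ sqfSub n) S := sat_of_basis b' S hstd
      have hsat : Sat n Λ S := sat_of_sat_inf hsat'
      obtain ⟨b'', h⟩ := basis_of_sat hΛ hfgΛ hsat
      exact ⟨S, b'', hcard, h⟩
    · rintro ⟨S, b', hcard, hstd⟩
      have hsat : Sat n Λ S := sat_of_basis b' S hstd
      have hsat' : Sat n (Λ ⊓ sqfSub n) S := sat_of_le inf_le_left hsat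
      obtain ⟨b'', h⟩ := basis_of_sat hint' hfg' hsat'
      exact ⟨S, b'', hcard, h⟩
  · -- Λ has no basis: its defect set is empty, so defect Λ = 0; take Λ' = ℤⁿ
    refine ⟨intLattice n, le_refl _, hΛ, fun x hx i => by
      rw [mem_denOneSub.1 (intLattice_le_denOneSub hx) i]; exact squarefree_one, ?_⟩
    have h1 : defect n Λ = 0 := by
      unfold defect
      have : {d | ∃ (S : Finset (Fin n)) (b : Module.Basis (Fin n) ℤ Λ),
          S.card = n - d ∧ ∀ i ∈ S, ∃ j, (b j : Fin n → ℚ) = Pi.single i 1} = ∅ := by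
        ext d
        simp only [Set.mem_setOf_eq, Set.mem_empty_iff_false, iff_false]
        rintro ⟨S, b, -, -⟩
        exact hb ⟨b⟩
      rw [this, Nat.sInf_empty]
    have h2 : defect n (intLattice n) = 0 := by
      apply Nat.sInf_eq_zero.2
      left
      refine ⟨Finset.univ, Module.Basis.span epsLI, by simp, fun i _ => ⟨i, ?_⟩⟩
      exact congrArg Subtype.val (Module.Basis.span_apply epsLI i)
    rw [h1, h2]
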